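/- arXiv:1608.03689 — 3 statements merged into one kernel-verified Lean document; each statement's English description precedes it below -/
import Mathlib

section
/- Let G be a finite simple directed graph without self-loops on vertex set [n], and let G' be the spanning subgraph of G obtained by keeping exactly those edges of G that belong to a unicycle of G. Then the MAIS regions of G' and G coincide: ℛ_MAIS(G') = ℛ_MAIS(G). -/
namespace IC

/-- The graph obtained by removing the edge `(a, b)`. -/
def removeEdge {V : Type*} (E : V → V → Prop) (a b : V) : V → V → Prop :=
  fun x y => E x y ∧ ¬(x = a ∧ y = b)

/-- The subgraph induced on `S` contains a directed cycle. -/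
def HasCycleIn {V : Type*} (E : V → V → Prop) (S : Set V) : Prop :=
  ∃ (m : ℕ) (v : Fin (m + 2) → V), Function.Injective v ∧ (∀ i, v i ∈ S) ∧
    ∀ i, E (v i) (v (i + 1))

/-- The MAIS outer bound region `ℛ_MAIS(G)`. -/
def maisRegion {n : ℕ} (E : Fin n → Fin n → Prop) : Set (Fin n → ℝ) :=
  {R | (∀ j, 0 ≤ R j) ∧
    ∀ S : Finset (Fin n), ¬ HasCycleIn E ↑S → ∑ j ∈ S, R j ≤ 1}

/-- The subgraph induced on `S` is a unicycle: `|S| ≥ 2` and `S` admits an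
enumeration `v_0, …, v_{m−1}` such that the edges of the induced subgraph are
exactly the directed Hamiltonian cycle `v_0 → v_1 → ⋯ → v_{m−1} → v_0`. -/
def IsUnicycle {V : Type*} (E : V → V → Prop) (S : Set V) : Prop :=
  ∃ (m : ℕ) (v : Fin (m + 2) → V), Function.Injective v ∧ Set.range v = S ∧
    ∀ a b, a ∈ S → b ∈ S → (E a b ↔ ∃ i, v i = a ∧ v (i + 1) = b)

/-- The edge `(x, y)` belongs to a unicycle of the graph. -/
def InUnicycle {V : Type*} (E : V → V → Prop) (x y : V) : Prop :=
  E x y ∧ ∃ S : Set V, IsUnicycle E S ∧ x ∈ S ∧ y ∈ S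

end IC

lemma fin_succ_val {N : ℕ} (x : Fin (N + 2)) :
    ((x + 1 : Fin (N + 2))).val = (x.val + 1) % (N + 2) := by
  rw [Fin.add_def, Fin.val_one]

open IC in
lemma hasCycleIn_inUnicycle {V : Type*} (E : V → V → Prop) (hE : ∀ i, ¬ E i i)
    (S : Set V) (h : HasCycleIn E S) :
    HasCycleIn (fun x y => InUnicycle E x y) S := by
  classical
  set P : ℕ → Prop := fun m => ∃ v : Fin (m + 2) → V, Function.Injective v ∧
      (∀ i, v i ∈ S) ∧ ∀ i, E (v i) (v (i + 1)) with hPdef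
  have hP : ∃ m : ℕ, P m := h
  obtain ⟨m, hPm, hmin⟩ : ∃ m, P m ∧ ∀ k < m, ¬P k :=
    ⟨Nat.find hP, Nat.find_spec hP, fun k hk => Nat.find_min hP hk⟩
  obtain ⟨v, hinj, hmem, hedge⟩ := hPm
  -- a minimal cycle has no chords
  have hnc : ∀ a b : Fin (m + 2), E (v a) (v b) → b = a + 1 := by
    intro a b hab
    by_contra hb
    have hane : a ≠ b := by rintro rfl; exact hE _ hab
    have hd0 : (a - b) ≠ 0 := sub_ne_zero.mpr hane
    have hd1 : 1 ≤ (a - b).val := by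
      have : (a - b).val ≠ 0 := by intro h; exact hd0 (Fin.ext (by rw [h, Fin.val_zero]))
      omega
    have hba : b + (a - b) = a := by abel
    have hd2 : (a - b).val ≤ m := by
      by_contra hgt
      have hvd : (a - b).val = m + 1 := by have := (a - b).isLt; omega
      have hc1 : (a - b) + 1 = 0 := by
        apply Fin.ext
        simp [fin_succ_val, hvd]
      have : b = a + 1 := by
        calc b = b + ((a - b) + 1) := by rw [hc1, add_zero]
        _ = (b + (a - b)) + 1 := by rw [add_assoc]
        _ = a + 1 := by rw [hba]
      exact hb this
    obtain ⟨k, hk1⟩ : ∃ k, k + 1 = (a - b).val := ⟨(a - b).val - 1, by omega⟩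
    have hk2 : k + 1 ≤ m := by omega
    have hle : k + 2 ≤ m + 2 := by omega
    have hPk : P k := by
      refine ⟨fun i => v (b + Fin.castLE hle i), ?_, fun i => hmem _, ?_⟩
      · intro i j hij
        have h1 : b + Fin.castLE hle i = b + Fin.castLE hle j := hinj hij
        exact Fin.castLE_injective hle (add_left_cancel h1)
      · intro i
        by_cases hi : i.val + 1 < k + 2
        · have e1 : Fin.castLE hle (i + 1) = Fin.castLE hle i + 1 := by
            apply Fin.ext
            rw [Fin.coe_castLE, fin_succ_val, fin_succ_val, Fin.coe_castLE,
              Nat.mod_eq_of_lt hi, Nat.mod_eq_of_lt (by omega)]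
          show E (v (b + Fin.castLE hle i)) (v (b + Fin.castLE hle (i + 1)))
          rw [e1, ← add_assoc]
          exact hedge _
        · have hik : i.val = k + 1 := by have := i.isLt; omega
          have e1 : Fin.castLE hle (i + 1) = 0 := by
            apply Fin.ext
            rw [Fin.coe_castLE, fin_succ_val, hik, Nat.mod_self, Fin.val_zero]
          have e2 : Fin.castLE hle i = a - b := by
            apply Fin.ext
            rw [Fin.coe_castLE, hik, hk1]
          show E (v (b + Fin.castLE hle i)) (v (b + Fin.castLE hle (i + 1)))
          rw [e1, e2, add_zero, hba]
          exact hab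
    exact hmin k (by omega) hPk
  -- hence the vertex set is a unicycle
  have huni : IsUnicycle E (Set.range v) := by
    refine ⟨m, v, hinj, rfl, ?_⟩
    intro x y hx hy
    constructor
    · intro hxy
      obtain ⟨a, rfl⟩ := hx
      obtain ⟨b, rfl⟩ := hy
      exact ⟨a, rfl, by rw [← hnc a b hxy]⟩
    · rintro ⟨i, rfl, rfl⟩
      exact hedge i
  exact ⟨m, v, hinj, hmem, fun i => ⟨hedge i, Set.range v, huni, ⟨i, rfl⟩, ⟨i + 1, rfl⟩⟩⟩

/-- Let `G'` be the spanning subgraph of `G` keeping exactly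
the edges that belong to a unicycle of `G`. Then `ℛ_MAIS(G') = ℛ_MAIS(G)`. -/
theorem maisRegion_unicycle_edges
    (n : ℕ) (E : Fin n → Fin n → Prop) (hE : ∀ i, ¬ E i i) :
    IC.maisRegion (fun x y => IC.InUnicycle E x y) = IC.maisRegion E := by
  have hsub : ∀ S : Set (Fin n), IC.HasCycleIn (fun x y => IC.InUnicycle E x y) S →
      IC.HasCycleIn E S := by
    rintro S ⟨m, v, hinj, hmem, hedge⟩
    exact ⟨m, v, hinj, hmem, fun i => (hedge i).1⟩
  ext R
  simp only [IC.maisRegion, Set.mem_setOf_eq]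
  constructor
  · rintro ⟨h0, h1⟩
    exact ⟨h0, fun S hS => h1 S fun hc => hS (hsub _ hc)⟩
  · rintro ⟨h0, h1⟩
    exact ⟨h0, fun S hS => h1 S fun hc => hS (hasCycleIn_inUnicycle E hE _ hc)⟩
end

section
/- Let G be a finite simple directed graph without self-loops and let e₁ and e₂ be edges of G, neither of which belongs to any unicycle of G. Then e₂ does not belong to any unicycle of G_{e₁}, the graph obtained from G by removing e₁. -/
/-- If neither of the edges `e₁ = (a₁, b₁)` and
`e₂ = (a₂, b₂)` of `G` belongs to any unicycle of `G`, then `e₂` does not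
belong to any unicycle of `G` with `e₁` removed. -/
theorem not_inUnicycle_removeEdge
    {V : Type} [Fintype V]
    (E : V → V → Prop) (hE : ∀ v, ¬ E v v)
    (a₁ b₁ a₂ b₂ : V) (h₁ : E a₁ b₁) (h₂ : E a₂ b₂)
    (hn₁ : ¬ IC.InUnicycle E a₁ b₁) (hn₂ : ¬ IC.InUnicycle E a₂ b₂) :
    ¬ IC.InUnicycle (IC.removeEdge E a₁ b₁) a₂ b₂ := by
  rintro ⟨he₂, S, ⟨m, v, hinj, hrange, hiff⟩, ha₂, hb₂⟩
  by_cases hab : a₁ ∈ S ∧ b₁ ∈ S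
  · -- both endpoints of e₁ in S: build a unicycle of E through e₁
    obtain ⟨ha₁, hb₁⟩ := hab
    have ha₁' := ha₁; have hb₁' := hb₁
    rw [← hrange] at ha₁' hb₁'
    obtain ⟨i, hi⟩ := ha₁'
    obtain ⟨j, hj⟩ := hb₁'
    have hmemS : ∀ k, v k ∈ S := fun k => hrange ▸ Set.mem_range_self k
    -- rotated enumeration starting at b₁
    set u : Fin (m + 2) → V := fun k => v (j + k) with hu
    have hu_inj : Function.Injective u := hinj.comp (add_right_injective j)
    have hu_mem : ∀ k, u k ∈ S := fun k => hmemS _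
    have hu_iff : ∀ a b, a ∈ S → b ∈ S →
        (IC.removeEdge E a₁ b₁ a b ↔ ∃ k, u k = a ∧ u (k + 1) = b) := by
      intro a b ha hb
      rw [hiff a b ha hb]
      constructor
      · rintro ⟨c, h1, h2⟩
        refine ⟨c - j, ?_, ?_⟩
        · show v (j + (c - j)) = a; rwa [show j + (c - j) = c by abel]
        · show v (j + (c - j + 1)) = b; rwa [show j + (c - j + 1) = c + 1 by abel]
      · rintro ⟨k, h1, h2⟩
        exact ⟨j + k, h1, by rwa [show j + k + 1 = j + (k + 1) by abel]⟩
    have hu_b : u 0 = b₁ := by show v (j + 0) = b₁; rwa [add_zero]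
    set i0 : Fin (m + 2) := i - j with hi0
    have hu_a : u i0 = a₁ := by
      show v (j + (i - j)) = a₁; rwa [show j + (i - j) = i by abel]
    have hne : a₁ ≠ b₁ := fun h => hE a₁ (h ▸ h₁)
    have hi0_ne0 : i0 ≠ 0 := fun h => hne (by rw [← hu_a, h, hu_b])
    have hi0_nelast : i0 ≠ Fin.last (m + 1) := by
      intro h
      have : IC.removeEdge E a₁ b₁ a₁ b₁ := by
        refine (hu_iff a₁ b₁ ha₁ hb₁).mpr ⟨i0, hu_a, ?_⟩
        rw [h, Fin.last_add_one, hu_b]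
      exact this.2 ⟨rfl, rfl⟩
    set p : ℕ := i0.val with hp
    have hp1 : 1 ≤ p := by
      have : i0.val ≠ 0 := by intro h; apply hi0_ne0; exact Fin.ext (by rw [h, Fin.val_zero])
      omega
    have hpm : p ≤ m := by
      have h1 := i0.isLt
      have h2 : i0.val ≠ m + 1 := by simpa [Fin.ext_iff] using hi0_nelast
      omega
    -- embedding of the short index set
    have hlt : ∀ k : Fin (p - 1 + 2), k.val < m + 2 := fun k => by
      have := k.isLt; omega
    set f : Fin (p - 1 + 2) → Fin (m + 2) := fun k => ⟨k.val, hlt k⟩ with hf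
    have hf_inj : Function.Injective f := by
      intro x y h
      have h2 : (f x).val = (f y).val := congrArg Fin.val h
      exact Fin.ext (by simpa [hf] using h2)
    have hf_zero : f 0 = 0 := Fin.ext (by simp [hf])
    have hf_last : f (Fin.last (p - 1 + 1)) = i0 := Fin.ext (by simp [hf]; omega)
    have hf_succ : ∀ k : Fin (p - 1 + 2), k.val < p → f (k + 1) = f k + 1 := by
      intro k hk
      have h1 : (k + 1).val = k.val + 1 :=
        Fin.val_add_one_of_lt (by rw [Fin.lt_def, Fin.val_last]; omega)
      have h2 : (f k + 1).val = k.val + 1 := by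
        rw [Fin.val_add_one_of_lt (by rw [Fin.lt_def, Fin.val_last]; show k.val < m + 1; omega)]
      exact Fin.ext (by show (k + 1).val = (f k + 1).val; rw [h1, h2])
    -- the short cycle
    set w : Fin (p - 1 + 2) → V := fun k => u (f k) with hw
    have hw_inj : Function.Injective w := fun x y h => hf_inj (hu_inj h)
    have hw_last : w (Fin.last (p - 1 + 1)) = a₁ := by
      show u (f _) = a₁; rw [hf_last]; exact hu_a
    have hw_zero : w 0 = b₁ := by
      show u (f 0) = b₁; rw [hf_zero]; exact hu_b
    have hw_mem : ∀ k, w k ∈ S := fun k => hu_mem _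
    have hcases : ∀ k : Fin (p - 1 + 2), k.val < p ∨ k = Fin.last (p - 1 + 1) := by
      intro k
      have := k.isLt
      rcases Nat.lt_or_ge k.val p with h | h
      · exact Or.inl h
      · exact Or.inr (Fin.ext (by rw [Fin.val_last]; omega))
    have hcyc : ∀ k : Fin (p - 1 + 2), E (w k) (w (k + 1)) := by
      intro k
      rcases hcases k with hk | hk
      · have : IC.removeEdge E a₁ b₁ (w k) (w (k + 1)) := by
          refine (hu_iff _ _ (hw_mem k) (hw_mem (k + 1))).mpr ⟨f k, rfl, ?_⟩
          show u (f k + 1) = u (f (k + 1))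
          rw [hf_succ k hk]
        exact this.1
      · rw [hk, Fin.last_add_one, hw_last, hw_zero]; exact h₁
    have huni : IC.IsUnicycle E (Set.range w) := by
      refine ⟨p - 1, w, hw_inj, rfl, ?_⟩
      rintro a b ⟨kp, hkp⟩ ⟨kq, hkq⟩
      constructor
      · intro hEab
        by_cases hE1 : a = a₁ ∧ b = b₁
        · obtain ⟨hA, hB⟩ := hE1
          have hkplast : kp = Fin.last (p - 1 + 1) := by
            have h1 : f kp = i0 := hu_inj (by show u (f kp) = u i0; rw [hu_a, ← hA]; exact hkp)
            have h2 : kp.val = p := by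
              have := congrArg Fin.val h1; simpa [hf] using this
            exact Fin.ext (by rw [Fin.val_last]; omega)
          refine ⟨kp, hkp, ?_⟩
          rw [hkplast, Fin.last_add_one]
          rw [hw_zero]; exact hB.symm
        · have hrem : IC.removeEdge E a₁ b₁ a b := ⟨hEab, hE1⟩
          obtain ⟨c, hc1, hc2⟩ :=
            (hu_iff a b (hkp ▸ hw_mem kp) (hkq ▸ hw_mem kq)).mp hrem
          have hcp : f kp = c := hu_inj (hkp.trans hc1.symm)
          have hcq : f kq = c + 1 := hu_inj (hkq.trans hc2.symm)
          have hkpval : kp.val < p := by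
            by_contra hcon
            have hkpp : kp.val = p := by have := kp.isLt; omega
            have hcv : c.val = p := by
              have := congrArg Fin.val hcp; simp [hf] at this; omega
            have h1 : (c + 1).val = p + 1 := by
              rw [Fin.val_add_one_of_lt (by rw [Fin.lt_def, Fin.val_last]; omega), hcv]
            have h2 := congrArg Fin.val hcq
            simp [hf, h1] at h2
            have := kq.isLt
            omega
          refine ⟨kp, hkp, ?_⟩
          show u (f (kp + 1)) = b
          rw [hf_succ kp hkpval, hcp]
          exact hc2
      · rintro ⟨k, hk1, hk2⟩
        rw [← hk1, ← hk2]
        exact hcyc k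
    exact hn₁ ⟨h₁, Set.range w, huni, ⟨_, hw_last⟩, ⟨_, hw_zero⟩⟩
  · -- an endpoint of e₁ is outside S: S is itself a unicycle of E
    refine hn₂ ⟨he₂.1, S, ⟨m, v, hinj, hrange, ?_⟩, ha₂, hb₂⟩
    intro a b ha hb
    constructor
    · intro hEab
      exact (hiff a b ha hb).mp ⟨hEab, fun ⟨h1, h2⟩ => hab ⟨h1 ▸ ha, h2 ▸ hb⟩⟩
    · intro h
      exact ((hiff a b ha hb).mpr h).1
end

section
/- Let G be a finite simple directed graph without self-loops on vertex set V, and let G' be the directed graph on V whose edges are exactly those edges of G that belong to a unicycle of G. Then the following four statements are equivalent: (1) for each clique K of U(Ḡ), the induced subgraph G|_K contains no directed cycle; (2) for each S ⊆ V, if G|_S contains a directed cycle, then G|_S contains a bidirectional edge, i.e., there exist i, j ∈ S with (i,j) ∈ E(G) and (j,i) ∈ E(G); (3) no unidirectional edge of G belongs to a unicycle of G; (4) G' is bidirectional. -/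
open Fin.NatCast in
lemma unicycle_of_min_cycle {V : Type} (E : V → V → Prop) (hE : ∀ v, ¬ E v v)
    (S : Set V) (m : ℕ) (v : Fin (m + 2) → V)
    (hinj : Function.Injective v) (hmem : ∀ i, v i ∈ S)
    (hedge : ∀ i, E (v i) (v (i + 1)))
    (hmin : ∀ k, k < m → ¬ ∃ w : Fin (k + 2) → V, Function.Injective w ∧
      (∀ i, w i ∈ S) ∧ ∀ i, E (w i) (w (i + 1))) :
    IC.IsUnicycle E (Set.range v) := by
  have hchord : ∀ p q : Fin (m + 2), E (v p) (v q) → q = p + 1 := by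
    intro p q hpq
    by_contra hq
    have hne : p ≠ q := by rintro rfl; exact hE _ hpq
    set d : ℕ := (p - q).val with hd
    have hd2 : d < m + 2 := (p - q).isLt
    have hd1 : 1 ≤ d := by
      rcases Nat.eq_zero_or_pos d with h | h
      · exact absurd (sub_eq_zero.mp (Fin.ext (by simpa [← hd] using h))) hne
      · exact h
    have hdm : d ≤ m := by
      by_contra hgt
      have hdval : d = m + 1 := by omega
      apply hq
      have h0 : (p - q) + 1 = 0 := by
        apply Fin.ext
        rw [Fin.add_def, Fin.val_one, ← hd, hdval, Fin.val_zero]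
        exact Nat.mod_self _
      have h1 : p + 1 = q + ((p - q) + 1) := by abel
      rw [h0, add_zero] at h1
      exact h1.symm
    apply hmin (d - 1) (by omega)
    refine ⟨fun i => v (q + (i.val : Fin (m + 2))), ?_, fun i => hmem _, ?_⟩
    · intro i j hij
      dsimp only at hij
      have h1 := add_left_cancel (hinj hij)
      have h2 := congrArg Fin.val h1
      rw [Fin.val_natCast, Fin.val_natCast,
        Nat.mod_eq_of_lt (by omega : i.val < m + 2),
        Nat.mod_eq_of_lt (by omega : j.val < m + 2)] at h2
      exact Fin.ext h2
    · intro i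
      dsimp only
      rcases Nat.lt_or_ge i.val (d - 1 + 1) with h | h
      · have hival : ((i + 1 : Fin (d - 1 + 2))).val = i.val + 1 := by
          rw [Fin.add_def, Fin.val_one]
          exact Nat.mod_eq_of_lt (by omega)
        have hc : (((i + 1 : Fin (d - 1 + 2))).val : Fin (m + 2)) =
            (i.val : Fin (m + 2)) + 1 := by
          rw [hival]; push_cast; ring
        rw [hc, ← add_assoc]
        exact hedge _
      · have hival : i.val = d - 1 + 1 := by omega
        have h1 : q + ((i.val : ℕ) : Fin (m + 2)) = p := by
          have hcast : ((i.val : ℕ) : Fin (m + 2)) = p - q := by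
            apply Fin.ext
            rw [Fin.val_natCast, hival, ← hd]
            have hde : d - 1 + 1 = d := by omega
            rw [hde]
            exact Nat.mod_eq_of_lt (by omega)
          rw [hcast]
          abel
        have h2 : ((i + 1 : Fin (d - 1 + 2))).val = 0 := by
          rw [Fin.add_def, Fin.val_one, hival]
          exact Nat.mod_self _
        rw [h1, h2]
        simpa using hpq
  refine ⟨m, v, hinj, rfl, ?_⟩
  rintro a b ⟨p, rfl⟩ ⟨q, rfl⟩
  constructor
  · intro hab
    exact ⟨p, rfl, by rw [← hchord p q hab]⟩
  · rintro ⟨i, hi1, hi2⟩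
    rw [← hi1, ← hi2]
    exact hedge i

lemma unicycle_of_cycle_aux {V : Type} (E : V → V → Prop) (hE : ∀ v, ¬ E v v)
    (S : Set V) (hcyc : IC.HasCycleIn E S)
    (hnobi : ∀ i ∈ S, ∀ j ∈ S, ¬ (E i j ∧ E j i)) :
    ∃ x y, E x y ∧ ¬ E y x ∧ IC.InUnicycle E x y := by
  classical
  obtain ⟨v, hinj, hmem, hedge⟩ := Nat.find_spec hcyc
  have huni := unicycle_of_min_cycle E hE S (Nat.find hcyc) v hinj hmem hedge
    (fun k hk => Nat.find_min hcyc hk)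
  have h01 : (0 : Fin (Nat.find hcyc + 2)) + 1 = 1 := zero_add 1
  have he01 : E (v 0) (v 1) := by have := hedge 0; rwa [h01] at this
  exact ⟨v 0, v 1, he01,
    fun h => hnobi (v 0) (hmem 0) (v 1) (hmem 1) ⟨he01, h⟩,
    he01, Set.range v, huni, ⟨0, rfl⟩, ⟨1, rfl⟩⟩

/-- The four statements are equivalent: (1) for each clique
`K` of `U(Ḡ)` the induced subgraph `G|_K` has no directed cycle; (2) whenever
`G|_S` has a directed cycle, `G|_S` contains a bidirectional edge; (3) no
unidirectional edge of `G` belongs to a unicycle of `G`; (4) the graph `G'` of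
edges of `G` belonging to a unicycle is bidirectional. -/
theorem unicycle_bidirectional_tfae
    {V : Type} [Fintype V]
    (E : V → V → Prop) (hE : ∀ v, ¬ E v v) :
    List.TFAE [
      ∀ K : Set V, (∀ i ∈ K, ∀ j ∈ K, i ≠ j → (¬ E i j ∨ ¬ E j i)) →
        ¬ IC.HasCycleIn E K,
      ∀ S : Set V, IC.HasCycleIn E S →
        ∃ i ∈ S, ∃ j ∈ S, E i j ∧ E j i,
      ∀ x y, E x y → ¬ E y x → ¬ IC.InUnicycle E x y,
      ∀ x y, IC.InUnicycle E x y → IC.InUnicycle E y x ] := by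
  tfae_have 1 → 2 := by
    intro h1 S hS
    by_contra hno
    push_neg at hno
    refine h1 S (fun i hi j hj hij => ?_) hS
    by_contra hc
    push_neg at hc
    exact hno i hi j hj hc.1 hc.2
  tfae_have 2 → 1 := by
    intro h2 K hK hcyc
    obtain ⟨i, hi, j, hj, hij, hji⟩ := h2 K hcyc
    have hne : i ≠ j := fun h => hE i (h ▸ hij)
    rcases hK i hi j hj hne with h | h
    · exact h hij
    · exact h hji
  tfae_have 2 → 3 := by
    rintro h2 x y hxy hyx ⟨-, T, ⟨n, v, hinj, hrange, hchar⟩, hxT, hyT⟩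
    have hcycT : IC.HasCycleIn E T := by
      refine ⟨n, v, hinj, fun i => hrange ▸ Set.mem_range_self i, fun i => ?_⟩
      exact (hchar _ _ (hrange ▸ Set.mem_range_self i)
        (hrange ▸ Set.mem_range_self (i + 1))).mpr ⟨i, rfl, rfl⟩
    obtain ⟨i, hi, j, hj, hij, hji⟩ := h2 T hcycT
    have hne : i ≠ j := fun h => hE i (h ▸ hij)
    obtain ⟨a, ha, ha1⟩ := (hchar i j hi hj).mp hij
    obtain ⟨b, hb, hb1⟩ := (hchar j i hj hi).mp hji
    have hab : a + 1 = b := hinj (ha1.trans hb.symm)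
    have hba : b + 1 = a := hinj (hb1.trans ha.symm)
    have h2z : (1 + 1 : Fin (n + 2)) = 0 := by
      have h3 : a + (1 + 1) = a + 0 := by
        rw [add_zero, ← add_assoc, hab, hba]
      exact add_left_cancel h3
    obtain ⟨p, hp, hp1⟩ := (hchar x y hxT hyT).mp hxy
    apply hyx
    refine (hchar y x hyT hxT).mpr ⟨p + 1, hp1, ?_⟩
    rw [add_assoc, h2z, add_zero, hp]
  tfae_have 3 → 2 := by
    intro h3 S hS
    by_contra hno
    push_neg at hno
    obtain ⟨x, y, hxy, hyx, hu⟩ := unicycle_of_cycle_aux E hE S hS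
      (fun i hi j hj h => hno i hi j hj h.1 h.2)
    exact h3 x y hxy hyx hu
  tfae_have 3 → 4 := by
    rintro h3 x y ⟨hxy, T, hT, hxT, hyT⟩
    have hyx : E y x := by
      by_contra h
      exact h3 x y hxy h ⟨hxy, T, hT, hxT, hyT⟩
    exact ⟨hyx, T, hT, hyT, hxT⟩
  tfae_have 4 → 3 := by
    intro h4 x y hxy hyx hu
    exact hyx (h4 x y hu).1
  tfae_finish
end
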